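/- arXiv:1612.01219 — 2 statements merged into one kernel-verified Lean document; each statement's English description precedes it below -/
import Mathlib

section
/- Let λ > 0 and C ≥ 0 be constants, and let h_0, h_1, h_2, ... : [0,∞) → [0,∞) be differentiable functions satisfying h_0'(t) ≤ -λ h_0(t) and, for each l ≥ 1, h_l'(t) ≤ -λ h_l(t) + C · l · h_{l-1}(t). Then for every l ≥ 0 and t ≥ 0, h_l(t) ≤ e^{-λ t} · Σ_{k=0}^{l} (l! / ((l-k)! k!)) · (C t)^k · h_{l-k}(0). -/
theorem stmt_0 (lam C : ℝ) (hlam : 0 < lam) (hC : 0 ≤ C)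
    (h h' : ℕ → ℝ → ℝ)
    (hpos : ∀ l t, 0 ≤ t → 0 ≤ h l t)
    (hderiv : ∀ l t, 0 ≤ t → HasDerivAt (h l) (h' l t) t)
    (h0 : ∀ t, 0 ≤ t → h' 0 t ≤ -lam * h 0 t)
    (hrec : ∀ l t, 1 ≤ l → 0 ≤ t → h' l t ≤ -lam * h l t + C * l * h (l - 1) t) :
    ∀ l : ℕ, ∀ t : ℝ, 0 ≤ t →
      h l t ≤ Real.exp (-lam * t) *
        ∑ k ∈ Finset.range (l + 1), (l.choose k : ℝ) * (C * t) ^ k * h (l - k) 0 := by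
  set G : ℕ → ℝ → ℝ :=
    fun l t => ∑ k ∈ Finset.range (l+1), (l.choose k : ℝ) * (C*t)^k * h (l-k) 0 with hGdef
  have hrec' : ∀ l t, 0 ≤ t → h' l t ≤ -lam * h l t + C * l * h (l-1) t := by
    intro l t ht
    rcases Nat.eq_zero_or_pos l with rfl | hl
    · simpa using h0 t ht
    · exact hrec l t hl ht
  have hG0 : ∀ l, G l 0 = h l 0 := by
    intro l
    simp only [hGdef]
    rw [Finset.sum_eq_single 0]
    · simp
    · intro k hk hk0
      simp [zero_pow hk0]
    · simp
  have hGd : ∀ l t, HasDerivAt (G l) (C * l * G (l-1) t) t := by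
    intro l t
    cases l with
    | zero =>
      have hconst : G 0 = fun _ => h 0 0 := by
        funext s; simp [hGdef]
      rw [hconst]
      simpa using hasDerivAt_const t (h 0 0)
    | succ n =>
      have hterm : ∀ k ∈ Finset.range (n+2), HasDerivAt
          (fun s => ((n+1).choose k : ℝ) * (C*s)^k * h (n+1-k) 0)
          (((n+1).choose k : ℝ) * ((k:ℝ) * (C*t)^(k-1) * C) * h (n+1-k) 0) t := by
        intro k _
        have h1 : HasDerivAt (fun s => C * s) C t := by
          simpa using (hasDerivAt_id t).const_mul C
        exact ((h1.pow k).const_mul _).mul_const _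
      have hsum := HasDerivAt.fun_sum hterm
      have hval : ∑ k ∈ Finset.range (n+2),
          ((n+1).choose k : ℝ) * ((k:ℝ) * (C*t)^(k-1) * C) * h (n+1-k) 0
          = C * (n+1) * G n t := by
        rw [Finset.sum_range_succ']
        simp only [hGdef]
        simp only [Nat.cast_zero, zero_mul, mul_zero]
        rw [Finset.mul_sum]
        rw [add_zero]
        refine Finset.sum_congr rfl fun i _ => ?_
        have hc : ((n+1).choose (i+1) : ℝ) * ((i:ℝ)+1) = ((n:ℝ)+1) * (n.choose i : ℝ) := by
          exact_mod_cast (Nat.add_one_mul_choose_eq n i).symm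
        have hk1 : (i + 1) - 1 = i := rfl
        have hk2 : n + 1 - (i + 1) = n - i := by omega
        rw [hk1, hk2]
        push_cast
        linear_combination ((C*t)^i * C * h (n-i) 0) * hc
      have : HasDerivAt (G (n+1)) (C * (n+1) * G n t) t := by
        simp only [hGdef]
        rw [← hval]
        exact hsum
      simpa using this
  have key : ∀ l, ∀ t, 0 ≤ t → Real.exp (lam*t) * h l t ≤ G l t := by
    intro l
    induction l using Nat.strong_induction_on with
    | _ l ih =>
      intro t ht
      set φ : ℝ → ℝ := fun s => Real.exp (lam*s) * h l s - G l s with hφ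
      have hφd : ∀ s, 0 ≤ s → HasDerivAt φ
          (lam * Real.exp (lam*s) * h l s + Real.exp (lam*s) * h' l s - C*l*G (l-1) s) s := by
        intro s hs
        have he : HasDerivAt (fun u => Real.exp (lam*u)) (lam * Real.exp (lam*s)) s := by
          simpa [mul_comm, Function.comp_def] using
            (Real.hasDerivAt_exp (lam*s)).comp s ((hasDerivAt_id s).const_mul lam)
        exact (he.mul (hderiv l s hs)).sub (hGd l s)
      have hmono : AntitoneOn φ (Set.Icc 0 t) := by
        apply antitoneOn_of_deriv_nonpos (convex_Icc 0 t)
        · intro s hs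
          exact ((hφd s hs.1).continuousAt).continuousWithinAt
        · intro s hs
          rw [interior_Icc] at hs
          exact (hφd s hs.1.le).differentiableAt.differentiableWithinAt
        · intro s hs
          rw [interior_Icc] at hs
          rw [(hφd s hs.1.le).deriv]
          have hb := hrec' l s hs.1.le
          have hexp : (0:ℝ) < Real.exp (lam*s) := Real.exp_pos _
          have h2 : Real.exp (lam*s) * h' l s
              ≤ Real.exp (lam*s) * (-lam * h l s + C*l*h (l-1) s) :=
            mul_le_mul_of_nonneg_left hb hexp.le
          have expand : Real.exp (lam*s) * (-lam * h l s + C*(l:ℝ)*h (l-1) s)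
              = -(lam * Real.exp (lam*s) * h l s)
                + C*(l:ℝ)*(Real.exp (lam*s) * h (l-1) s) := by ring
          rw [expand] at h2
          have h3 : C * (l:ℝ) * (Real.exp (lam*s) * h (l-1) s) ≤ C * (l:ℝ) * G (l-1) s := by
            rcases Nat.eq_zero_or_pos l with rfl | hl
            · simp
            · have hih := ih (l-1) (Nat.sub_lt hl one_pos) s hs.1.le
              exact mul_le_mul_of_nonneg_left hih (by positivity)
          linarith
      have hφt : φ t ≤ φ 0 :=
        hmono (Set.left_mem_Icc.mpr ht) (Set.right_mem_Icc.mpr ht) ht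
      have hφ0 : φ 0 = 0 := by
        simp [hφ, hG0 l]
      rw [hφ0] at hφt
      have := sub_nonpos.mp hφt
      linarith [this]
  intro l t ht
  have h1 : Real.exp (lam*t) * h l t ≤ G l t := key l t ht
  calc h l t = Real.exp (-lam*t) * (Real.exp (lam*t) * h l t) := by
        rw [neg_mul, ← mul_assoc, ← Real.exp_add, neg_add_cancel, Real.exp_zero, one_mul]
    _ ≤ Real.exp (-lam*t) * G l t :=
        mul_le_mul_of_nonneg_left h1 (Real.exp_pos _).le
    _ = _ := by simp only [hGdef]
end

section
/- Let λ > 0, C ≥ 0, H ≥ 0 be constants and let h_0, h_1, ... : [0,∞) → [0,∞) be differentiable with h_0' ≤ -λ h_0, h_l' ≤ -λ h_l + C l h_{l-1} for l ≥ 1, and h_l(0) ≤ H^l for all l ≥ 0. Then h_l(t) ≤ e^{-λ t} (H + C t)^l for all l ≥ 0, t ≥ 0. -/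
lemma mono_aux (f f' : ℝ → ℝ)
    (hd : ∀ t ∈ Set.Ici (0:ℝ), HasDerivAt f (f' t) t)
    (hle : ∀ t ∈ Set.Ioi (0:ℝ), f' t ≤ 0) :
    ∀ t, 0 ≤ t → f t ≤ f 0 := by
  intro t ht
  have hA : AntitoneOn f (Set.Ici 0) := by
    apply antitoneOn_of_hasDerivWithinAt_nonpos (convex_Ici 0)
      (fun x hx => (hd x hx).continuousAt.continuousWithinAt)
    · intro x hx
      rw [interior_Ici] at hx
      exact (hd x (Set.mem_Ici.mpr (le_of_lt (Set.mem_Ioi.mp hx)))).hasDerivWithinAt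
    · intro x hx
      rw [interior_Ici] at hx
      exact hle x hx
  exact hA Set.self_mem_Ici ht ht

theorem stmt_1 (lam C H : ℝ) (hlam : 0 < lam) (hC : 0 ≤ C) (hH : 0 ≤ H)
    (h h' : ℕ → ℝ → ℝ)
    (hpos : ∀ l t, 0 ≤ t → 0 ≤ h l t)
    (hderiv : ∀ l t, 0 ≤ t → HasDerivAt (h l) (h' l t) t)
    (h0 : ∀ t, 0 ≤ t → h' 0 t ≤ -lam * h 0 t)
    (hrec : ∀ l t, 1 ≤ l → 0 ≤ t → h' l t ≤ -lam * h l t + C * l * h (l - 1) t)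
    (hinit : ∀ l : ℕ, h l 0 ≤ H ^ l) :
    ∀ l : ℕ, ∀ t : ℝ, 0 ≤ t →
      h l t ≤ Real.exp (-lam * t) * (H + C * t) ^ l := by
  intro l
  induction l with
  | zero =>
    intro t ht
    -- F t = exp (lam * t) * h 0 t
    have key : ∀ s, 0 ≤ s →
        Real.exp (lam * s) * h 0 s ≤ Real.exp (lam * 0) * h 0 0 := by
      apply mono_aux (fun s => Real.exp (lam * s) * h 0 s)
        (fun s => lam * Real.exp (lam * s) * h 0 s + Real.exp (lam * s) * h' 0 s)
      · intro s hs
        have he : HasDerivAt (fun s => Real.exp (lam * s)) (lam * Real.exp (lam * s)) s := by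
          have := ((hasDerivAt_id s).const_mul lam).exp
          simpa [mul_comm] using this
        exact he.mul (hderiv 0 s hs)
      · intro s hs
        have hs' : (0:ℝ) ≤ s := le_of_lt hs
        have h1 : h' 0 s ≤ -lam * h 0 s := h0 s hs'
        nlinarith [Real.exp_pos (lam * s), hpos 0 s hs',
          mul_le_mul_of_nonneg_left h1 (Real.exp_pos (lam * s)).le]
    have := key t ht
    simp only [mul_zero, Real.exp_zero, one_mul] at this
    have h00 : h 0 0 ≤ 1 := by simpa using hinit 0
    have hE : Real.exp (lam * t) * h 0 t ≤ 1 := le_trans this h00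
    have hEpos : (0:ℝ) < Real.exp (lam * t) := Real.exp_pos _
    have hinv : Real.exp (lam * t) * (Real.exp (lam * t))⁻¹ = 1 :=
      mul_inv_cancel₀ hEpos.ne'
    have : h 0 t ≤ Real.exp (-lam * t) := by
      rw [neg_mul, Real.exp_neg]
      nlinarith [hE, hinv, hEpos]
    simpa using this
  | succ n ih =>
    intro t ht
    set m := n + 1 with hm
    have key : ∀ s, 0 ≤ s →
        Real.exp (lam * s) * h m s - (H + C * s) ^ m ≤
        Real.exp (lam * 0) * h m 0 - (H + C * 0) ^ m := by
      apply mono_aux (fun s => Real.exp (lam * s) * h m s - (H + C * s) ^ m)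
        (fun s => (lam * Real.exp (lam * s) * h m s + Real.exp (lam * s) * h' m s)
          - (m * (H + C * s) ^ n * C))
      · intro s hs
        have he : HasDerivAt (fun s => Real.exp (lam * s)) (lam * Real.exp (lam * s)) s := by
          have := ((hasDerivAt_id s).const_mul lam).exp
          simpa [mul_comm] using this
        have h1 : HasDerivAt (fun s => Real.exp (lam * s) * h m s)
            (lam * Real.exp (lam * s) * h m s + Real.exp (lam * s) * h' m s) s := by
          exact he.mul (hderiv m s hs)
        have h2 : HasDerivAt (fun s : ℝ => (H + C * s) ^ m)
            (m * (H + C * s) ^ n * C) s := by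
          have hb : HasDerivAt (fun s : ℝ => H + C * s) C s := by
            simpa using ((hasDerivAt_id s).const_mul C).const_add H
          have := hb.pow m
          rw [show m - 1 = n by omega] at this; exact this
        exact h1.sub h2
      · intro s hs
        have hs' : (0:ℝ) ≤ s := le_of_lt hs
        have hrecm : h' m s ≤ -lam * h m s + C * m * h n s := by
          have := hrec m s (Nat.le_add_left 1 n) hs'
          simpa [hm] using this
        have hih : h n s ≤ Real.exp (-lam * s) * (H + C * s) ^ n := ih s hs'
        have hexp : Real.exp (lam * s) * Real.exp (-lam * s) = 1 := by
          rw [← Real.exp_add]; ring_nf; exact Real.exp_zero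
        have hEpos : (0:ℝ) < Real.exp (lam * s) := Real.exp_pos _
        -- exp(lam s) * (h' m s + lam * h m s) ≤ exp(lam s) * C * m * h n s ≤ C * m * (H+Cs)^n
        have step1 : Real.exp (lam * s) * h' m s + lam * Real.exp (lam * s) * h m s
            ≤ Real.exp (lam * s) * (C * m * h n s) := by
          have := mul_le_mul_of_nonneg_left hrecm hEpos.le
          nlinarith
        have step2 : Real.exp (lam * s) * (C * m * h n s)
            ≤ C * m * (H + C * s) ^ n := by
          have hcm : (0:ℝ) ≤ C * m := by positivity
          have := mul_le_mul_of_nonneg_left hih hcm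
          calc Real.exp (lam * s) * (C * m * h n s)
              ≤ Real.exp (lam * s) * (C * m * (Real.exp (-lam * s) * (H + C * s) ^ n)) := by
                exact mul_le_mul_of_nonneg_left this hEpos.le
            _ = (Real.exp (lam * s) * Real.exp (-lam * s)) * (C * m * (H + C * s) ^ n) := by ring
            _ = C * m * (H + C * s) ^ n := by rw [hexp, one_mul]
        have : (m : ℝ) = (n : ℝ) + 1 := by push_cast [hm]; ring
        nlinarith [step1, step2]
    have := key t ht
    simp only [mul_zero, add_zero, Real.exp_zero, one_mul] at this
    have h00 : h m 0 ≤ H ^ m := hinit m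
    have hE : Real.exp (lam * t) * h m t ≤ (H + C * t) ^ m := by nlinarith
    have hEpos : (0:ℝ) < Real.exp (lam * t) := Real.exp_pos _
    have hexp : Real.exp (-lam * t) * Real.exp (lam * t) = 1 := by
      rw [← Real.exp_add]; ring_nf; exact Real.exp_zero
    calc h m t = Real.exp (-lam * t) * (Real.exp (lam * t) * h m t) := by
          rw [← mul_assoc, hexp, one_mul]
      _ ≤ Real.exp (-lam * t) * (H + C * t) ^ m :=
          mul_le_mul_of_nonneg_left hE (Real.exp_pos _).le
end
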